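/- Let D ⊆ ℝ, let f_1, f_2 : D → ℝ be strictly increasing functions, and let δ > 0. Then H^1_{2δ}((f_1 + f_2)(D)) ≤ H^1_δ(f_1(D)) + H^1_δ(f_2(D)), where for a set E ⊆ ℝ and η > 0, H^1_η(E) denotes the infimum of Σ_i diam(U_i) over all at most countable covers {U_i} of E by sets of diameter at most η (the infimum taken in the extended nonnegative reals). -/

import Mathlib

open MeasureTheory

/-- The `η`-approximation `H¹_η(E)` of the one-dimensional Hausdorff measure: the infimum of
`Σᵢ diam Uᵢ` over all at most countable covers `{Uᵢ}` of `E` by sets of diameter at most `η`. -/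
noncomputable def preHausdorff (η : ℝ) (E : Set ℝ) : ENNReal :=
  ⨅ (U : ℕ → Set ℝ) (_ : E ⊆ ⋃ i, U i)
      (_ : ∀ i, EMetric.diam (U i) ≤ ENNReal.ofReal η),
    ∑' i, EMetric.diam (U i)

open Set in
/-- The Stieltjes measure of a continuous monotone function applied to the preimage of a set `U`
is at most the diameter of `U`. -/
lemma stieltjes_preimage_le (F : StieltjesFunction ℝ) (hF : Continuous F) (U : Set ℝ) :
    F.measure (⇑F ⁻¹' U) ≤ EMetric.diam U := by
  by_cases hU : EMetric.diam U = ⊤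
  · exact hU ▸ le_top
  have hb : Bornology.IsBounded U := Metric.isBounded_iff_ediam_ne_top.2 hU
  rcases U.eq_empty_or_nonempty with rfl | hne
  · simp
  set c := sInf U
  set d := sSup U
  have hll : ∀ a : ℝ, Function.leftLim F a = F a := fun a =>
    leftLim_eq_of_tendsto (h := nhdsLT_neBot a)
      ((hF.tendsto a).mono_left nhdsWithin_le_nhds)
  have hIcc : ∀ a b : ℝ, F.measure (Icc a b) = ENNReal.ofReal (F b - F a) := fun a b => by
    rw [F.measure_Icc, hll]
  have hsub : U ⊆ Icc c d := fun u hu => ⟨csInf_le hb.bddBelow hu, le_csSup hb.bddAbove hu⟩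
  set I : Set ℝ := ⇑F ⁻¹' Icc c d with hI
  have hIm : F.measure (⇑F ⁻¹' U) ≤ F.measure I :=
    measure_mono (preimage_mono hsub)
  have hIu : I = ⋃ n : ℕ, I ∩ Icc (-(n : ℝ)) n := by
    ext x
    simp only [mem_iUnion, mem_inter_iff]
    constructor
    · intro hx
      obtain ⟨n, hn⟩ := exists_nat_ge |x|
      exact ⟨n, hx, by constructor <;> [linarith [neg_abs_le x]; linarith [le_abs_self x]]⟩
    · rintro ⟨n, hx, -⟩; exact hx
  have hdir : Directed (· ⊆ ·) (fun n : ℕ => I ∩ Icc (-(n : ℝ)) n) := by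
    apply Monotone.directed_le
    intro m n hmn
    exact inter_subset_inter le_rfl
      (Icc_subset_Icc (by exact_mod_cast neg_le_neg (Nat.cast_le.2 hmn)) (by exact_mod_cast hmn))
  have key : ∀ n : ℕ, F.measure (I ∩ Icc (-(n : ℝ)) n) ≤ ENNReal.ofReal (d - c) := by
    intro n
    set J := I ∩ Icc (-(n : ℝ)) n with hJ
    rcases J.eq_empty_or_nonempty with hJe | hJn
    · simp [hJe]
    have hJc : IsClosed J := ((isClosed_Icc.preimage hF).inter isClosed_Icc)
    have hJbb : BddBelow J := ⟨-(n : ℝ), fun x hx => hx.2.1⟩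
    have hJba : BddAbove J := ⟨(n : ℝ), fun x hx => hx.2.2⟩
    have ha : sInf J ∈ J := hJc.csInf_mem hJn hJbb
    have hbJ : sSup J ∈ J := hJc.csSup_mem hJn hJba
    have hJsub : J ⊆ Icc (sInf J) (sSup J) := fun x hx => ⟨csInf_le hJbb hx, le_csSup hJba hx⟩
    calc F.measure J ≤ F.measure (Icc (sInf J) (sSup J)) := measure_mono hJsub
      _ = ENNReal.ofReal (F (sSup J) - F (sInf J)) := hIcc _ _
      _ ≤ ENNReal.ofReal (d - c) := by
          apply ENNReal.ofReal_le_ofReal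
          have h1 : F (sInf J) ∈ Icc c d := ha.1
          have h2 : F (sSup J) ∈ Icc c d := hbJ.1
          linarith [h1.1, h2.2]
  calc F.measure (⇑F ⁻¹' U) ≤ F.measure I := hIm
    _ = ⨆ n : ℕ, F.measure (I ∩ Icc (-(n : ℝ)) n) := by
        conv_lhs => rw [hIu]
        exact Directed.measure_iUnion hdir
    _ ≤ ENNReal.ofReal (d - c) := iSup_le key
    _ = EMetric.diam U := (Real.ediam_eq hb).symm

lemma sup_diam_helper (s : Set ℝ) :
    (⨆ _ : s.Nonempty, EMetric.diam s ^ (1 : ℝ)) = EMetric.diam s := by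
  rcases s.eq_empty_or_nonempty with rfl | h
  · simp [EMetric.diam]
  · rw [iSup_pos h, ENNReal.rpow_one]

lemma preHausdorff_le_volume {η : ℝ} (hη : 0 < η) (E : Set ℝ) :
    preHausdorff η E ≤ volume E := by
  rw [← hausdorffMeasure_real, MeasureTheory.Measure.hausdorffMeasure_apply]
  refine le_trans ?_ (le_iSup₂ (ENNReal.ofReal η) (ENNReal.ofReal_pos.2 hη))
  refine le_iInf fun t => le_iInf fun hcov => le_iInf fun hd => ?_
  calc preHausdorff η E ≤ ∑' n, EMetric.diam (t n) :=
        iInf_le_of_le t (iInf_le_of_le hcov (iInf_le_of_le hd le_rfl))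
    _ = ∑' n, ⨆ _ : (t n).Nonempty, EMetric.diam (t n) ^ (1 : ℝ) :=
        tsum_congr fun n => (sup_diam_helper (t n)).symm

/-- If `f₁, f₂ : D → ℝ` are strictly increasing and `δ > 0`, then
`H¹_{2δ}((f₁ + f₂)(D)) ≤ H¹_δ(f₁(D)) + H¹_δ(f₂(D))`. -/
theorem stmt_15 (D : Set ℝ) (f₁ f₂ : ℝ → ℝ)
    (h₁ : StrictMonoOn f₁ D) (h₂ : StrictMonoOn f₂ D) (δ : ℝ) (hδ : 0 < δ) :
    preHausdorff (2 * δ) ((fun x => f₁ x + f₂ x) '' D) ≤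
      preHausdorff δ (f₁ '' D) + preHausdorff δ (f₂ '' D) := by
  rcases D.eq_empty_or_nonempty with rfl | ⟨x₀, hx₀⟩
  · have h0 : preHausdorff (2 * δ) ((fun x => f₁ x + f₂ x) '' ∅) ≤ 0 := by
      refine iInf_le_of_le (fun _ => (∅ : Set ℝ))
        (iInf_le_of_le (by simp) (iInf_le_of_le (fun i => by simp [EMetric.diam]) (by simp [EMetric.diam])))
    exact h0.trans zero_le
  have hm₁ : MonotoneOn f₁ D := h₁.monotoneOn
  have hm₂ : MonotoneOn f₂ D := h₂.monotoneOn
  haveI : Nonempty ↥D := ⟨⟨x₀, hx₀⟩⟩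
  set T : ℝ → ↥D → ℝ := fun t x => f₁ x + max (t - (f₁ x + f₂ x)) 0 with hTdef
  have hTlb : ∀ (t : ℝ) (x : ↥D), min (t - f₂ x₀) (f₁ x₀) ≤ T t x := by
    intro t x
    rcases le_total (x : ℝ) x₀ with h | h
    · have hf₂ : f₂ x ≤ f₂ x₀ := hm₂ x.2 hx₀ h
      calc min (t - f₂ x₀) (f₁ x₀) ≤ t - f₂ x₀ := min_le_left _ _
        _ ≤ f₁ x + (t - (f₁ x + f₂ x)) := by linarith
        _ ≤ T t x := add_le_add_right (le_max_left _ _) _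
    · have hf₁ : f₁ x₀ ≤ f₁ x := hm₁ hx₀ x.2 h
      calc min (t - f₂ x₀) (f₁ x₀) ≤ f₁ x₀ := min_le_right _ _
        _ ≤ f₁ x := hf₁
        _ ≤ T t x := le_add_of_nonneg_right (le_max_right _ _)
  have hbdd : ∀ t : ℝ, BddBelow (Set.range (T t)) :=
    fun t => ⟨min (t - f₂ x₀) (f₁ x₀), by rintro y ⟨x, rfl⟩; exact hTlb t x⟩
  set p : ℝ → ℝ := fun t => ⨅ x : ↥D, T t x with hpdef
  have hple : ∀ (t : ℝ) (x : ↥D), p t ≤ T t x := fun t x => ciInf_le (hbdd t) x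
  have hlep : ∀ (t c : ℝ), (∀ x : ↥D, c ≤ T t x) → c ≤ p t := fun t c h => le_ciInf h
  have hpg : ∀ y ∈ D, p (f₁ y + f₂ y) = f₁ y := by
    intro y hy
    apply le_antisymm
    · have h := hple (f₁ y + f₂ y) ⟨y, hy⟩
      simpa [hTdef] using h
    · apply hlep
      intro x
      rcases le_total (x : ℝ) y with h | h
      · have h2 : f₂ x ≤ f₂ y := hm₂ x.2 hy h
        have h1 : f₁ x ≤ f₁ y := hm₁ x.2 hy h
        have hmax : f₁ y + f₂ y - (f₁ x + f₂ x) ≤ max (f₁ y + f₂ y - (f₁ x + f₂ x)) 0 :=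
          le_max_left _ _
        show f₁ y ≤ f₁ x + max (f₁ y + f₂ y - (f₁ x + f₂ x)) 0
        linarith
      · have h1 : f₁ y ≤ f₁ x := hm₁ hy x.2 h
        exact h1.trans (le_add_of_nonneg_right (le_max_right _ _))
  have hpmono : Monotone p := by
    intro s t hst
    apply hlep
    intro x
    refine (hple s x).trans ?_
    exact add_le_add_right (max_le_max (by linarith) le_rfl) _
  have hplip : ∀ s t : ℝ, s ≤ t → p t ≤ p s + (t - s) := by
    intro s t hst
    have h1 : ∀ x : ↥D, p t - (t - s) ≤ T s x := by
      intro x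
      have h2 : T t x ≤ T s x + (t - s) := by
        have hmax : max (t - (f₁ x + f₂ x)) 0 ≤ max (s - (f₁ x + f₂ x)) 0 + (t - s) := by
          apply max_le
          · have := le_max_left (s - (f₁ (x : ℝ) + f₂ (x : ℝ))) 0; linarith
          · have := le_max_right (s - (f₁ (x : ℝ) + f₂ (x : ℝ))) 0; linarith
        show f₁ x + max (t - (f₁ x + f₂ x)) 0 ≤ f₁ x + max (s - (f₁ x + f₂ x)) 0 + (t - s)
        linarith
      have h3 := hple t x
      linarith
    have h4 := hlep s _ h1
    linarith
  set q : ℝ → ℝ := fun t => t - p t with hqdef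
  have hqmono : Monotone q := by
    intro s t hst
    have := hplip s t hst
    show s - p s ≤ t - p t
    linarith
  have habs : ∀ s t : ℝ, s ≤ t → dist (p s) (p t) ≤ dist s t := by
    intro s t h
    have h1 := hpmono h
    have h2 := hplip s t h
    rw [Real.dist_eq, Real.dist_eq, abs_of_nonpos (by linarith : p s - p t ≤ 0),
      abs_of_nonpos (by linarith : s - t ≤ 0)]
    linarith
  have hpcont : Continuous p := by
    refine (LipschitzWith.of_dist_le_mul (K := 1) fun s t => ?_).continuous
    rw [NNReal.coe_one, one_mul]
    rcases le_total s t with h | h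
    · exact habs s t h
    · rw [dist_comm, dist_comm s t]; exact habs t s h
  have hqcont : Continuous q := continuous_id.sub hpcont
  set P : StieltjesFunction ℝ := ⟨p, hpmono, fun x => hpcont.continuousWithinAt⟩ with hP
  set Q : StieltjesFunction ℝ := ⟨q, hqmono, fun x => hqcont.continuousWithinAt⟩ with hQ
  have hvol : (volume : Measure ℝ) = P.measure + Q.measure := by
    refine Measure.ext_of_Ioc volume _ (fun a b hab => ?_)
    rw [Real.volume_Ioc, Measure.add_apply, P.measure_Ioc, Q.measure_Ioc]
    rw [← ENNReal.ofReal_add (sub_nonneg.2 (hpmono hab.le)) (sub_nonneg.2 (hqmono hab.le))]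
    congr 1
    show b - a = p b - p a + ((b - p b) - (a - p a))
    ring
  have hPm : P.measure ((fun x => f₁ x + f₂ x) '' D) ≤ preHausdorff δ (f₁ '' D) := by
    refine le_iInf fun U => le_iInf fun hcov => le_iInf fun _ => ?_
    have hsub : (fun x => f₁ x + f₂ x) '' D ⊆ ⋃ i, ⇑P ⁻¹' (U i) := by
      rintro s ⟨x, hx, rfl⟩
      have h1 : f₁ x ∈ ⋃ i, U i := hcov ⟨x, hx, rfl⟩
      obtain ⟨i, hi⟩ := Set.mem_iUnion.1 h1
      refine Set.mem_iUnion.2 ⟨i, ?_⟩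
      show p (f₁ x + f₂ x) ∈ U i
      rw [hpg x hx]; exact hi
    calc P.measure ((fun x => f₁ x + f₂ x) '' D) ≤ P.measure (⋃ i, ⇑P ⁻¹' (U i)) :=
          measure_mono hsub
      _ ≤ ∑' i, P.measure (⇑P ⁻¹' (U i)) := measure_iUnion_le _
      _ ≤ ∑' i, EMetric.diam (U i) :=
          ENNReal.tsum_le_tsum fun i => stieltjes_preimage_le P hpcont (U i)
  have hQm : Q.measure ((fun x => f₁ x + f₂ x) '' D) ≤ preHausdorff δ (f₂ '' D) := by
    refine le_iInf fun U => le_iInf fun hcov => le_iInf fun _ => ?_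
    have hsub : (fun x => f₁ x + f₂ x) '' D ⊆ ⋃ i, ⇑Q ⁻¹' (U i) := by
      rintro s ⟨x, hx, rfl⟩
      have h1 : f₂ x ∈ ⋃ i, U i := hcov ⟨x, hx, rfl⟩
      obtain ⟨i, hi⟩ := Set.mem_iUnion.1 h1
      refine Set.mem_iUnion.2 ⟨i, ?_⟩
      show (f₁ x + f₂ x) - p (f₁ x + f₂ x) ∈ U i
      rw [hpg x hx]
      simpa using hi
    calc Q.measure ((fun x => f₁ x + f₂ x) '' D) ≤ Q.measure (⋃ i, ⇑Q ⁻¹' (U i)) :=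
          measure_mono hsub
      _ ≤ ∑' i, Q.measure (⇑Q ⁻¹' (U i)) := measure_iUnion_le _
      _ ≤ ∑' i, EMetric.diam (U i) :=
          ENNReal.tsum_le_tsum fun i => stieltjes_preimage_le Q hqcont (U i)
  calc preHausdorff (2 * δ) ((fun x => f₁ x + f₂ x) '' D)
      ≤ volume ((fun x => f₁ x + f₂ x) '' D) := preHausdorff_le_volume (by linarith) _
    _ = P.measure ((fun x => f₁ x + f₂ x) '' D) + Q.measure ((fun x => f₁ x + f₂ x) '' D) := by
        rw [hvol, Measure.add_apply]
    _ ≤ preHausdorff δ (f₁ '' D) + preHausdorff δ (f₂ '' D) := add_le_add hPm hQm
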